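/- Let (e_1,…,e_s) be a T-chain and let δ be the first entry of a discrepancy vector for (e_1,…,e_s). Then the T-chain (e_1+1, e_2,…,e_s, 2) admits a discrepancy vector whose first entry is −1/(δ+2), and the T-chain (2, e_1,…,e_{s−1}, e_s+1) admits a discrepancy vector whose first entry is δ/(1−δ). -/

import Mathlib

/-- Hirzebruch–Jung continued fraction: `hjcf [b₁,…,b_r] = b₁ - 1/(b₂ - 1/(⋯ - 1/b_r))`.
(With the convention `hjcf [] = 0`, so that `hjcf [b] = b` since `1/0 = 0`.) -/
def hjcf : List ℚ → ℚ
  | [] => 0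
  | b :: l => b - 1 / hjcf l

/-- Hirzebruch–Jung continued fraction of a list of integers. -/
def hjcfZ (b : List ℤ) : ℚ := hjcf (b.map (fun x => (x : ℚ)))

/-- `b` is a T-chain. -/
def IsTChain (b : List ℤ) : Prop :=
  (∀ x ∈ b, 2 ≤ x) ∧
    ∃ d n a : ℤ, 1 ≤ d ∧ 0 < a ∧ a < n ∧ Int.gcd a n = 1 ∧
      hjcfZ b = ((d * n ^ 2 : ℤ) : ℚ) / ((d * n * a - 1 : ℤ) : ℚ)

/-- `δ` is a discrepancy vector for the chain `b`. -/
def IsDiscrepancyVector (b : List ℤ) (δ : List ℚ) : Prop :=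
  δ.length = b.length ∧
    ∀ i < b.length,
      -((b.getD i 0 : ℚ)) * δ.getD i 0
          + (if i = 0 then 0 else δ.getD (i - 1) 0) + δ.getD (i + 1) 0
        = (b.getD i 0 : ℚ) - 2

/-- The operation `(e₁,…,e_s) ↦ (e₁+1, e₂,…,e_s, 2)`. -/
def addLeft (b : List ℤ) : List ℤ := b.modifyHead (· + 1) ++ [2]

/-- The operation `(e₁,…,e_s) ↦ (2, e₁,…,e_{s-1}, e_s+1)`. -/
def addRight (b : List ℤ) : List ℤ := 2 :: (b.reverse.modifyHead (· + 1)).reverse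

/- ### Auxiliary machinery -/

lemma hjcfZ_eq (b : List ℤ) : hjcfZ b = hjcf (b.map (fun x : ℤ => (x:ℚ))) := by
  unfold hjcfZ
  congr 1
  induction b with
  | nil => rfl
  | cons a l ih => simpa using ih

/-- Two-term linear recurrence sequence. -/
def rec2 (c : ℕ → ℤ) (a b : ℤ) : ℕ → ℤ
  | 0 => a
  | 1 => b
  | k+2 => c k * rec2 c a b (k+1) - rec2 c a b k

lemma rec2_det (c : ℕ → ℤ) (a b a' b' : ℤ) :
    ∀ k, rec2 c a b (k+1) * rec2 c a' b' k - rec2 c a b k * rec2 c a' b' (k+1) = b * a' - a * b' := by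
  intro k
  induction k with
  | zero => simp [rec2]
  | succ k ih => simp only [rec2]; linear_combination ih

/-- Generic monotonicity for solutions of the recurrence with coefficients `≥ 2`. -/
lemma rec2_mono (s : ℕ) (c : ℕ → ℤ) (hc : ∀ k, k < s → 2 ≤ c k)
    (y : ℕ → ℤ) (hy : ∀ k, k < s → y (k+2) = c k * y (k+1) - y k)
    (k0 : ℕ) (h0 : 0 ≤ y k0) (h1 : y k0 ≤ y (k0+1)) :
    ∀ k, k0 ≤ k → k ≤ s → y k0 ≤ y k ∧ y (k0+1) - y k0 ≤ y (k+1) - y k := by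
  intro k hk
  induction k, hk using Nat.le_induction with
  | base => intro _; exact ⟨le_refl _, le_refl _⟩
  | succ k hk ih =>
    intro hks
    obtain ⟨ih1, ih2⟩ := ih (by omega)
    have hrec := hy k (by omega)
    have hyk1 : 0 ≤ y (k+1) := by linarith
    have h2c : 2 ≤ c k := hc k (by omega)
    have hm : 0 ≤ (c k - 2) * y (k+1) := mul_nonneg (by linarith) hyk1
    refine ⟨by linarith, ?_⟩
    have : y (k+2) - y (k+1) = (y (k+1) - y k) + (c k - 2) * y (k+1) := by rw [hrec]; ring
    linarith

set_option maxHeartbeats 2000000 in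
theorem stmt7 (e : List ℤ) (hT : IsTChain e)
    (δvec : List ℚ) (hδ : IsDiscrepancyVector e δvec)
    (δ : ℚ) (hhead : δvec.getD 0 0 = δ) :
    (∃ δ' : List ℚ, IsDiscrepancyVector (addLeft e) δ' ∧
        δ'.getD 0 0 = -1 / (δ + 2)) ∧
      (∃ δ'' : List ℚ, IsDiscrepancyVector (addRight e) δ'' ∧
        δ''.getD 0 0 = δ / (1 - δ)) := by
  classical
  obtain ⟨he2, d, n, a, hd, ha, han, hgcd, heq⟩ := hT
  obtain ⟨hlen, Hyp⟩ := hδ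
  set s := e.length with hs
  -- basic positivity for d, n, a
  have hn2 : 2 ≤ n := by omega
  have hNZpos : (0:ℤ) < d * n ^ 2 := by positivity
  have hMZpos : (0:ℤ) < d * n * a - 1 := by nlinarith
  -- s ≥ 1
  have hspos : 1 ≤ s := by
    by_contra h
    have hnil : e = [] := List.length_eq_zero_iff.mp (by omega)
    rw [hnil] at heq
    have h0 : hjcfZ [] = 0 := by simp [hjcfZ, hjcf]
    rw [h0] at heq
    have hne : ((d * n ^ 2 : ℤ) : ℚ) ≠ 0 := by exact_mod_cast hNZpos.ne'
    have hne2 : ((d * n * a - 1 : ℤ) : ℚ) ≠ 0 := by exact_mod_cast hMZpos.ne'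
    exact (div_ne_zero hne hne2) heq.symm
  -- coefficient sequence, read from the right
  set cZ : ℕ → ℤ := fun k => e.getD (s - 1 - k) 0 with hcZdef
  have hgetD2 : ∀ j, j < s → 2 ≤ e.getD j 0 := by
    intro j hj
    rw [List.getD_eq_getElem e 0 (by omega)]
    exact he2 _ (List.getElem_mem _)
  have hcZ2 : ∀ k, k < s → 2 ≤ cZ k := fun k hk => hgetD2 _ (by omega)
  set w : ℕ → ℤ := rec2 cZ 0 1 with hwdef
  set z : ℕ → ℤ := rec2 cZ (-1) 0 with hzdef
  have hw0 : w 0 = 0 := rfl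
  have hw1 : w 1 = 1 := rfl
  have hz0 : z 0 = -1 := rfl
  have hz1 : z 1 = 0 := rfl
  have hwrec : ∀ k, w (k+2) = cZ k * w (k+1) - w k := fun k => rfl
  have hzrec : ∀ k, z (k+2) = cZ k * z (k+1) - z k := fun k => rfl
  have hw2 : w 2 = cZ 0 := by simpa [hw0, hw1] using hwrec 0
  have hz2 : z 2 = 1 := by simpa [hz0, hz1] using hzrec 0
  set N : ℤ := w (s+1) with hNdef
  set M : ℤ := w s with hMdef
  set P : ℤ := z (s+1) with hPdef
  set Q : ℤ := z s with hQdef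
  -- monotonicity facts
  have wmono := rec2_mono s cZ hcZ2 w (fun k _ => hwrec k) 0 (by rw [hw0]) (by rw [hw0, hw1]; norm_num)
  have hwpos : ∀ k, 1 ≤ k → k ≤ s + 1 → 1 ≤ w k := by
    intro k h1 h2
    obtain ⟨g1, g2⟩ := wmono (k-1) (by omega) (by omega)
    have hk1 : k - 1 + 1 = k := by omega
    rw [hk1] at g2
    simp only [zero_add, hw0, hw1] at g1 g2
    omega
  have hM1 : 1 ≤ M := hwpos s hspos (by omega)
  have hMN : M + 1 ≤ N := by
    obtain ⟨g1, g2⟩ := wmono s (by omega) (le_refl s)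
    simp only [zero_add, hw0, hw1] at g2; omega
  have zmono := rec2_mono s cZ hcZ2 z (fun k _ => hzrec k) 1 (by rw [hz1])
    (by norm_num [hz1, hz2])
  have hP1 : 1 ≤ P := by
    obtain ⟨g1, g2⟩ := zmono s hspos (le_refl s)
    norm_num [hz1, hz2] at g2
    omega
  -- w - z is at least 1 up to the end
  have hwz : ∀ k, (fun k => w k - z k) (k+2) = cZ k * ((fun k => w k - z k) (k+1)) - (fun k => w k - z k) k := by
    intro k; simp only; rw [hwrec, hzrec]; ring
  have wzmono := rec2_mono s cZ hcZ2 (fun k => w k - z k) (fun k _ => hwz k) 1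
    (by rw [hw1, hz1]; norm_num)
    (by
        norm_num [hw1, hz1, hw2, hz2]
        have := hcZ2 0 (by omega)
        omega)
  have hPN : P + 1 ≤ N := by
    obtain ⟨g1, g2⟩ := wzmono s hspos (le_refl s)
    norm_num [hw1, hz1, hw2, hz2] at g1 g2
    have hc0 := hcZ2 0 (by omega)
    omega
  -- determinant identity : N * Q - M * P = -1
  have hdet : N * Q - M * P = -1 := by
    have := rec2_det cZ 0 1 (-1) 0 s
    simpa [hNdef, hMdef, hPdef, hQdef] using this
  -- continued fraction value: hjcfZ e = N / M
  have hL4 : ∀ k, 1 ≤ k → k ≤ s → hjcf ((e.drop (s - k)).map (fun x : ℤ => (x:ℚ))) = (w (k+1) : ℚ) / (w k : ℚ) := by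
    intro k hk
    induction k, hk using Nat.le_induction with
    | base =>
      intro hks
      rw [List.drop_eq_getElem_cons (by omega : s - 1 < e.length)]
      have h1 : s - 1 + 1 = s := by omega
      have hdl : e.drop s = [] := List.drop_length
      rw [h1, hdl]
      have h2 : (1:ℕ) + 1 = 2 := rfl
      rw [h2, hw2, hw1]
      have hc0 : cZ 0 = e[s-1] := by
        show e.getD (s - 1 - 0) 0 = e[s-1]
        rw [Nat.sub_zero]
        exact List.getD_eq_getElem e 0 (by omega)
      simp [hjcf, hc0]
    | succ k hk ih =>
      intro hks
      have ihv := ih (by omega)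
      have hj : s - (k+1) < e.length := by omega
      rw [List.drop_eq_getElem_cons hj]
      have hj1 : s - (k+1) + 1 = s - k := by omega
      rw [hj1]
      simp only [List.map_cons]
      rw [hjcf, ihv]
      have hwk : (1:ℤ) ≤ w k := hwpos k (by omega) (by omega)
      have hwk1 : (1:ℤ) ≤ w (k+1) := hwpos (k+1) (by omega) (by omega)
      have hwkQ : (0:ℚ) < (w k : ℚ) := by exact_mod_cast lt_of_lt_of_le zero_lt_one hwk
      have hwk1Q : (0:ℚ) < (w (k+1) : ℚ) := by exact_mod_cast lt_of_lt_of_le zero_lt_one hwk1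
      have hcast : ((e[s - (k+1)] : ℤ) : ℚ) = (cZ k : ℚ) := by
        congr 1
        show _ = e.getD (s - 1 - k) 0
        rw [List.getD_eq_getElem e 0 (by omega)]
        congr 1
        omega
      rw [hcast, hwrec k]
      push_cast
      field_simp
  have hNM : hjcfZ e = (N : ℚ) / (M : ℚ) := by
    have h := hL4 s hspos (le_refl s)
    rw [Nat.sub_self] at h
    rw [hjcfZ_eq]
    exact h
  -- positivity in ℚ
  have hNQ0 : (0:ℚ) < (N:ℚ) := by exact_mod_cast (by omega : (0:ℤ) < N)
  have hMQ0 : (0:ℚ) < (M:ℚ) := by exact_mod_cast (by omega : (0:ℤ) < M)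
  -- identification N = d n², M = dna - 1
  have hcross : N * (d * n * a - 1) = d * n ^ 2 * M := by
    rw [hNM] at heq
    rw [div_eq_div_iff hMQ0.ne' (by exact_mod_cast hMZpos.ne')] at heq
    exact_mod_cast heq
  have hcopNM : IsCoprime (N) (M) := ⟨-Q, P, by linear_combination -hdet⟩
  have hcopDN : IsCoprime (d * n ^ 2) (d * n * a - 1) := by
    have h1 : IsCoprime (d) (d * n * a - 1) := ⟨n * a, -1, by ring⟩
    have h2 : IsCoprime (n) (d * n * a - 1) := ⟨d * a, -1, by ring⟩
    have h3 := h1.mul_left (h2.mul_left h2)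
    have heq' : d * n ^ 2 = d * (n * n) := by ring
    rwa [heq']
  have hNeq : N = d * n ^ 2 := by
    have hd1 : N ∣ M * (d * n ^ 2) := ⟨d * n * a - 1, by linear_combination -hcross⟩
    have hd2 : N ∣ d * n ^ 2 := hcopNM.dvd_of_dvd_mul_left hd1
    have hd3 : d * n ^ 2 ∣ (d * n * a - 1) * N := ⟨M, by linear_combination hcross⟩
    have hd4 : d * n ^ 2 ∣ N := hcopDN.dvd_of_dvd_mul_left hd3
    exact Int.dvd_antisymm (by omega) (by omega) hd2 hd4
  have hMeq : M = d * n * a - 1 := by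
    have h : d * n ^ 2 * (d * n * a - 1) = d * n ^ 2 * M := by linear_combination hcross - (d * n * a - 1) * hNeq
    exact (mul_left_cancel₀ hNZpos.ne' h).symm
  have hPeq : P = d * n * (n - a) - 1 := by
    have hp1 : N ∣ P * M - 1 := ⟨Q, by linear_combination -hdet⟩
    have hp2 : N ∣ (d * n * (n - a) - 1) * M - 1 := by
      rw [hNeq, hMeq]
      exact ⟨d * a * (n - a) - 1, by ring⟩
    have hp3 : N ∣ (P - (d * n * (n - a) - 1)) * M := by
      have hsub := dvd_sub hp1 hp2
      have heqq : P * M - 1 - ((d * n * (n - a) - 1) * M - 1) = (P - (d * n * (n - a) - 1)) * M := by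
        ring
      rwa [heqq] at hsub
    have hp4 : N ∣ P - (d * n * (n - a) - 1) := hcopNM.dvd_of_dvd_mul_right hp3
    have hb1 : 1 ≤ d * n * (n - a) - 1 := by nlinarith
    have hb2 : d * n * (n - a) - 1 < N := by rw [hNeq]; nlinarith
    have := Int.eq_zero_of_abs_lt_dvd hp4 (abs_lt.mpr ⟨by omega, by omega⟩)
    omega
  -- the normalized discrepancy sequence, read from the right
  set χ : ℕ → ℚ := fun k => if k ≤ s then δvec.getD (s - k) 0 + 1 else 1 with hχdef
  have hδout : ∀ j, s ≤ j → δvec.getD j 0 = 0 := by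
    intro j hj
    exact List.getD_eq_default _ _ (by omega)
  have hχ0 : χ 0 = 1 := by
    simp only [hχdef, if_pos (by omega : 0 ≤ s), Nat.sub_zero, hδout s (le_refl s)]
    norm_num
  have hχs1 : χ (s+1) = 1 := by simp [hχdef]
  have hχrec : ∀ k, k < s → χ (k+2) = (cZ k : ℚ) * χ (k+1) - χ k := by
    intro k hk
    have hi : s - 1 - k < s := by omega
    have H := Hyp (s - 1 - k) hi
    have hcc : ((e.getD (s-1-k) 0 : ℤ) : ℚ) = (cZ k : ℚ) := rfl
    have hk1 : χ (k+1) = δvec.getD (s-1-k) 0 + 1 := by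
      simp only [hχdef, if_pos (by omega : k+1 ≤ s)]
      congr 2
      omega
    have hk0 : χ k = δvec.getD (s-1-k+1) 0 + 1 := by
      simp only [hχdef, if_pos (by omega : k ≤ s)]
      congr 2
      omega
    rw [hcc] at H
    by_cases hcase : k + 2 ≤ s
    · have hk2 : χ (k+2) = δvec.getD (s-1-k-1) 0 + 1 := by
        simp only [hχdef, if_pos hcase]
        congr 2
        omega
      rw [if_neg (by omega : ¬ (s-1-k = 0))] at H
      rw [hk2, hk1, hk0]
      linarith [H]
    · -- k = s - 1, so s - 1 - k = 0
      have h0 : s - 1 - k = 0 := by omega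
      rw [h0] at H
      rw [if_pos rfl] at H
      have hk2 : χ (k+2) = 1 := by
        simp only [hχdef, if_neg (by omega : ¬ (k+2 ≤ s))]
      rw [hk2, hk1, hk0, h0]
      linarith [H]
  -- χ as a combination of w and z
  have hcomb : ∀ k, k + 1 ≤ s + 1 →
      χ k = χ 1 * (w k : ℚ) - (z k : ℚ) ∧ χ (k+1) = χ 1 * (w (k+1) : ℚ) - (z (k+1) : ℚ) := by
    intro k
    induction k with
    | zero =>
      intro _
      constructor
      · rw [hχ0, hw0, hz0]; push_cast; ring
      · rw [hw1, hz1]; push_cast; ring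
    | succ k ih =>
      intro hk
      obtain ⟨ih1, ih2⟩ := ih (by omega)
      refine ⟨ih2, ?_⟩
      have hr := hχrec k (by omega)
      rw [hr, ih1, ih2, hwrec k, hzrec k]
      push_cast
      ring
  have hcombs := hcomb s (by omega)
  have heq1 : (1:ℚ) = χ 1 * (N : ℚ) - (P : ℚ) := by
    rw [← hχs1]; exact hcombs.2
  have heq2 : δ + 1 = χ 1 * (M : ℚ) - (Q : ℚ) := by
    have h : χ s = δ + 1 := by
      simp only [hχdef, if_pos (le_refl s), Nat.sub_self, hhead]
    rw [← h]; exact hcombs.1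
  have hdetQ : (N:ℚ) * Q - M * P = -1 := by exact_mod_cast hdet
  -- value of δ and of the last entry
  have hχ1 : χ 1 = (1 + (P:ℚ)) / N := by
    rw [eq_div_iff hNQ0.ne']
    linarith [heq1]
  have hδval : δ = ((M:ℚ) + 1 - N) / N := by
    rw [hχ1] at heq2
    rw [eq_div_iff hNQ0.ne']
    field_simp at heq2
    linear_combination heq2 - hdetQ
  have hlast : δvec.getD (s-1) 0 = ((P:ℚ) + 1 - N) / N := by
    have hχ1v : χ 1 = δvec.getD (s-1) 0 + 1 := by
      simp only [hχdef, if_pos (by omega : 1 ≤ s)]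
    rw [hχ1] at hχ1v
    rw [eq_div_iff hNQ0.ne']
    field_simp at hχ1v ⊢
    linarith [hχ1v]
  -- key facts
  have hMPN : M + P = N - 2 := by rw [hMeq, hPeq, hNeq]; ring
  have hsum : δ + δvec.getD (s-1) 0 = -1 := by
    rw [hδval, hlast]
    rw [← add_div, div_eq_iff hNQ0.ne']
    have h : (M:ℚ) + P = N - 2 := by exact_mod_cast hMPN
    linarith
  have hδle : δ ≤ 0 := by
    rw [hδval]
    apply div_nonpos_of_nonpos_of_nonneg _ hNQ0.le
    have h : (M:ℚ) + 1 ≤ N := by exact_mod_cast hMN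
    linarith
  have hδgt : -1 < δ := by
    rw [hδval]
    rw [lt_div_iff₀ hNQ0]
    linarith [hMQ0]
  have hKpos : (0:ℚ) < δ + 2 := by linarith
  have hK'pos : (0:ℚ) < 1 - δ := by linarith
  -- ### Construction of the new discrepancy vectors
  have hKne : (δ + 2) ≠ 0 := by linarith
  have hK'ne : (1 - δ) ≠ 0 := by linarith
  -- decompositions of e
  obtain ⟨e0, t, hE⟩ : ∃ e0 t, e = e0 :: t := by
    cases e with
    | nil => simp [hs] at hspos
    | cons e0 t => exact ⟨e0, t, rfl⟩
  obtain ⟨l', lastel, hE2⟩ : ∃ l' lastel, e = l' ++ [lastel] := by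
    rcases e.eq_nil_or_concat with h | ⟨l', lastel, h⟩
    · rw [h] at hs; simp [hs] at hspos
    · exact ⟨l', lastel, by simpa [List.concat_eq_append] using h⟩
  have hl'len : l'.length = s - 1 := by
    have h : s = (l' ++ [lastel]).length := by rw [← hE2]
    simp at h
    omega
  have hlast_el : e.getD (s-1) 0 = lastel := by
    rw [hE2, List.getD_append_right _ _ _ _ (by omega)]
    simp [hl'len]
  -- addLeft coefficients
  have haLlen : (addLeft e).length = s + 1 := by
    simp [addLeft, hs]
  have haL0 : ((addLeft e).getD 0 0) = e.getD 0 0 + 1 := by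
    rw [hE]; rfl
  have haLmid : ∀ j, 0 < j → j < s → (addLeft e).getD j 0 = e.getD j 0 := by
    intro j h1 h2
    rw [addLeft, List.getD_append _ _ _ _ (by simp [hs]; omega)]
    rw [hE]
    obtain ⟨j', rfl⟩ : ∃ j', j = j' + 1 := ⟨j - 1, by omega⟩
    rfl
  have haLs : (addLeft e).getD s 0 = 2 := by
    rw [addLeft, List.getD_append_right _ _ _ _ (by simp [hs])]
    simp [hs]
  -- addRight coefficients
  have haR : addRight e = 2 :: (l' ++ [lastel + 1]) := by
    rw [hE2, addRight]
    simp
  have haRlen : (addRight e).length = s + 1 := by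
    rw [haR]; simp [hl'len]; omega
  have haR0 : (addRight e).getD 0 0 = 2 := by rw [haR]; rfl
  have haRmid : ∀ j, 0 < j → j < s → (addRight e).getD j 0 = e.getD (j-1) 0 := by
    intro j h1 h2
    rw [haR]
    obtain ⟨j', rfl⟩ : ∃ j', j = j' + 1 := ⟨j - 1, by omega⟩
    rw [List.getD_cons_succ, List.getD_append _ _ _ _ (by omega), hE2,
      List.getD_append _ _ _ _ (by omega)]
    simp
  have haRs : (addRight e).getD s 0 = e.getD (s-1) 0 + 1 := by
    rw [haR, hlast_el]
    obtain ⟨s', hs'⟩ : ∃ s', s = s' + 1 := ⟨s - 1, by omega⟩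
    rw [hs']
    rw [List.getD_cons_succ, List.getD_append_right _ _ _ _ (by omega)]
    have h0 : s' - l'.length = 0 := by omega
    rw [h0]
    simp
  -- the last entry of δvec
  have hlastδ : δvec.getD (s-1) 0 = -1 - δ := by linarith [hsum]
  -- getD values of the two candidate vectors
  have hgetL : ∀ j, (δvec.map (fun x => -1 + (x+1)/(δ + 2)) ++ [-1 + 1/(δ + 2)]).getD j 0
      = if j ≤ s then -1 + (δvec.getD j 0 + 1)/(δ + 2) else 0 := by
    intro j
    rcases lt_trichotomy j s with h | h | h
    · rw [if_pos h.le, List.getD_append _ _ _ _ (by simp [hlen]; omega)]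
      rw [List.getD_eq_getElem _ _ (by simp [hlen]; omega),
        List.getD_eq_getElem _ _ (by omega : j < δvec.length)]
      simp
    · subst h
      rw [if_pos le_rfl, List.getD_append_right _ _ _ _ (by simp [hlen]), hδout _ le_rfl]
      simp [hlen]
    · rw [if_neg (by omega)]
      exact List.getD_eq_default _ _ (by simp [hlen]; omega)
  have hgetR : ∀ j, ((-1 + 1/(1 - δ)) :: δvec.map (fun x => -1 + (x+1)/(1 - δ))).getD j 0
      = if j = 0 then -1 + 1/(1 - δ) else
          if j ≤ s then -1 + (δvec.getD (j-1) 0 + 1)/(1 - δ) else 0 := by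
    intro j
    rcases Nat.eq_zero_or_pos j with h0 | h0
    · subst h0; rfl
    · obtain ⟨j', rfl⟩ : ∃ j', j = j' + 1 := ⟨j - 1, by omega⟩
      rw [if_neg (by omega), List.getD_cons_succ]
      rcases le_or_gt (j' + 1) s with h | h
      · rw [if_pos h]
        rw [List.getD_eq_getElem _ _ (by simp [hlen]; omega),
          List.getD_eq_getElem _ _ (by omega : j' + 1 - 1 < δvec.length)]
        simp
      · rw [if_neg (by omega)]
        exact List.getD_eq_default _ _ (by simp [hlen]; omega)
  constructor
  · -- addLeft
    refine ⟨δvec.map (fun x => -1 + (x+1)/(δ + 2)) ++ [-1 + 1/(δ + 2)], ⟨?_, ?_⟩, ?_⟩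
    · simp [haLlen, hlen]
    · intro i hi
      rw [haLlen] at hi
      rcases Nat.lt_trichotomy i s with hcase | hcase | hcase
      · -- i < s
        rcases Nat.eq_zero_or_pos i with h0 | h0
        · subst h0
          have H := Hyp 0 (by omega)
          rw [if_pos rfl, hhead] at H
          rw [if_pos rfl, haL0, hgetL 0, hgetL 1, if_pos (by omega : 0 ≤ s),
            if_pos (by omega : 1 ≤ s), hhead]
          rw [show δvec.getD 1 0 = ((e.getD 0 0 : ℤ) : ℚ) * δ + ((e.getD 0 0 : ℤ) : ℚ) - 2 from
            by linarith [H]]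
          push_cast
          field_simp
          ring
        · -- 0 < i < s
          have H := Hyp i (by omega)
          rw [if_neg (by omega)] at H
          rw [if_neg (by omega), haLmid i h0 hcase, hgetL (i-1), hgetL i, hgetL (i+1),
            if_pos (by omega : i - 1 ≤ s), if_pos (by omega : i ≤ s), if_pos (by omega : i + 1 ≤ s)]
          rw [show δvec.getD (i-1) 0 = ((e.getD i 0 : ℤ) : ℚ) * δvec.getD i 0
              - δvec.getD (i+1) 0 + ((e.getD i 0 : ℤ) : ℚ) - 2 from by linarith [H]]
          push_cast
          field_simp
          ring
      · -- i = s
        subst hcase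
        rw [if_neg (by omega), haLs, hgetL (s-1), hgetL s, hgetL (s+1),
          if_pos (by omega : s - 1 ≤ s), if_pos (le_refl s), if_neg (by omega : ¬ (s + 1 ≤ s)),
          hδout s le_rfl, hlastδ]
        push_cast
        field_simp
        ring
      · omega
    · rw [hgetL 0, if_pos (by omega), hhead]
      field_simp
      ring
  · -- addRight
    refine ⟨(-1 + 1/(1 - δ)) :: δvec.map (fun x => -1 + (x+1)/(1 - δ)), ⟨?_, ?_⟩, ?_⟩
    · simp [haRlen, hlen]
    · intro i hi
      rw [haRlen] at hi
      rcases Nat.lt_trichotomy i s with hcase | hcase | hcase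
      · rcases Nat.eq_zero_or_pos i with h0 | h0
        · subst h0
          rw [if_pos rfl, haR0, hgetR 0, hgetR 1, if_pos rfl, if_neg (by omega),
            if_pos (by omega : 1 ≤ s)]
          rw [show ((1:ℕ) - 1 : ℕ) = 0 from rfl, hhead]
          push_cast
          field_simp
          ring
        · -- 0 < i < s
          rcases Nat.eq_zero_or_pos (i - 1) with h1 | h1
          · -- i = 1
            have hi1 : i = 1 := by omega
            subst hi1
            have H := Hyp 0 (by omega)
            rw [if_pos rfl, hhead] at H
            rw [if_neg (by omega), haRmid 1 h0 hcase, hgetR 0, hgetR 1, hgetR 2,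
              if_pos rfl, if_neg (by omega : ¬ (1:ℕ) = 0), if_pos (by omega : 1 ≤ s),
              if_neg (by omega : ¬ (2:ℕ) = 0), if_pos (by omega : 2 ≤ s)]
            rw [show ((1:ℕ) - 1 : ℕ) = 0 from rfl, show ((2:ℕ) - 1 : ℕ) = 1 from rfl, hhead]
            rw [show δvec.getD 1 0 = ((e.getD 0 0 : ℤ) : ℚ) * δ + ((e.getD 0 0 : ℤ) : ℚ) - 2 from
              by linarith [H]]
            push_cast
            field_simp
            ring
          · -- 2 ≤ i
            have H := Hyp (i-1) (by omega)
            rw [if_neg (by omega), show i - 1 + 1 = i from by omega] at H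
            rw [if_neg (by omega), haRmid i h0 hcase, hgetR (i-1), hgetR i, hgetR (i+1),
              if_neg (by omega : ¬ i - 1 = 0), if_pos (by omega : i - 1 ≤ s),
              if_neg (by omega : ¬ i = 0), if_pos (by omega : i ≤ s),
              if_neg (by omega : ¬ i + 1 = 0), if_pos (by omega : i + 1 ≤ s),
              show i + 1 - 1 = i from by omega]
            rw [show δvec.getD (i-1-1) 0 = ((e.getD (i-1) 0 : ℤ) : ℚ) * δvec.getD (i-1) 0
                - δvec.getD i 0 + ((e.getD (i-1) 0 : ℤ) : ℚ) - 2 from by linarith [H]]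
            push_cast
            field_simp
            ring
      · -- i = s
        subst hcase
        have H := Hyp (s-1) (by omega)
        rw [show s - 1 + 1 = s from by omega, hδout s le_rfl] at H
        rw [if_neg (by omega), haRs, hgetR (s-1), hgetR s, hgetR (s+1),
          if_pos (le_refl s), if_neg (by omega : ¬ s = 0),
          if_neg (by omega : ¬ s + 1 = 0), if_neg (by omega : ¬ s + 1 ≤ s)]
        rcases Nat.eq_zero_or_pos (s - 1) with h1 | h1
        · -- s = 1
          rw [h1, if_pos rfl]
          rw [h1, if_pos rfl, hhead] at H
          have hδ12 : δ = -(1/2) := by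
            have h2 := hlastδ
            rw [h1, hhead] at h2
            linarith
          rw [hhead, hδ12]
          rw [hδ12] at H
          push_cast
          norm_num at H ⊢
          linarith
        · rw [if_neg (by omega), if_pos (Nat.sub_le s 1)]
          rw [if_neg (by omega)] at H
          rw [hlastδ] at H ⊢
          rw [show δvec.getD (s-1-1) 0 =
              -((e.getD (s-1) 0 : ℤ) : ℚ) * δ - 2 from by linarith [H]]
          push_cast
          field_simp
          ring
      · omega
    · rw [List.getD_cons_zero]
      field_simp
      ring
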